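/- Bound on accumulated local gradients: if η_L ≤ 1/(8·L·K), then for every round t, writing θ_i = Σ_{k=0}^{K−1} ∇F_i(x_{t,k}^i), the iterates of generalized FedAvg satisfy Σ_{i=1}^m E_t[‖θ_i‖²] ≤ 15·m·K³·L²·η_L²·(σ_L² + 6·K·σ_G²) + (90·m·K⁴·L²·η_L² + 3·m·K²)·‖∇f(x_t)‖² + 3·m·K²·σ_G². -/

import Mathlib

open MeasureTheory ProbabilityTheory Finset

section Helpers

variable {E : Type*} [NormedAddCommGroup E] [InnerProductSpace ℝ E]

omit [InnerProductSpace ℝ E] in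
lemma aux_young (u v : E) {c : ℝ} (hc : 0 < c) :
    ‖u + v‖ ^ 2 ≤ (1 + 1 / c) * ‖u‖ ^ 2 + (1 + c) * ‖v‖ ^ 2 := by
  have h1 : ‖u + v‖ ≤ ‖u‖ + ‖v‖ := norm_add_le u v
  have h2 : ‖u + v‖ ^ 2 ≤ (‖u‖ + ‖v‖) ^ 2 := by
    have := norm_nonneg (u + v)
    nlinarith [norm_nonneg u, norm_nonneg v]
  have h3 : 2 * (‖u‖ * ‖v‖) ≤ ‖u‖ ^ 2 / c + c * ‖v‖ ^ 2 := by
    have h4 : 0 ≤ (‖u‖ - c * ‖v‖) ^ 2 := sq_nonneg _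
    rw [div_add' _ _ _ (ne_of_gt hc), le_div_iff₀ hc]
    nlinarith
  calc ‖u + v‖ ^ 2 ≤ (‖u‖ + ‖v‖) ^ 2 := h2
    _ = ‖u‖ ^ 2 + 2 * (‖u‖ * ‖v‖) + ‖v‖ ^ 2 := by ring
    _ ≤ ‖u‖ ^ 2 + (‖u‖ ^ 2 / c + c * ‖v‖ ^ 2) + ‖v‖ ^ 2 := by linarith
    _ = (1 + 1 / c) * ‖u‖ ^ 2 + (1 + c) * ‖v‖ ^ 2 := by field_simp; ring

omit [InnerProductSpace ℝ E] in
lemma aux_three (u v w : E) :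
    ‖u + v + w‖ ^ 2 ≤ 3 * ‖u‖ ^ 2 + 3 * ‖v‖ ^ 2 + 3 * ‖w‖ ^ 2 := by
  have h1 : ‖u + v + w‖ ≤ ‖u‖ + ‖v‖ + ‖w‖ :=
    (norm_add_le _ _).trans (by gcongr; exact norm_add_le u v)
  nlinarith [norm_nonneg (u + v + w), norm_nonneg u, norm_nonneg v, norm_nonneg w,
    sq_nonneg (‖u‖ - ‖v‖), sq_nonneg (‖u‖ - ‖w‖), sq_nonneg (‖v‖ - ‖w‖)]

omit [InnerProductSpace ℝ E] in
lemma aux_sum_sq (n : ℕ) (v : ℕ → E) :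
    ‖∑ k ∈ range n, v k‖ ^ 2 ≤ n * ∑ k ∈ range n, ‖v k‖ ^ 2 := by
  have h1 : ‖∑ k ∈ range n, v k‖ ≤ ∑ k ∈ range n, ‖v k‖ := norm_sum_le _ _
  have h2 : ‖∑ k ∈ range n, v k‖ ^ 2 ≤ (∑ k ∈ range n, ‖v k‖) ^ 2 := by
    have := norm_nonneg (∑ k ∈ range n, v k)
    nlinarith [Finset.sum_nonneg (fun k (_ : k ∈ range n) => norm_nonneg (v k))]
  refine h2.trans ?_
  have := sq_sum_le_card_mul_sum_sq (s := range n) (f := fun k => ‖v k‖)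
  simpa using this

lemma aux_geo {K : ℕ} (hK : 1 ≤ K) :
    ((2 * K : ℝ) - 1) / 2 * ((1 + 2 / (2 * K - 1)) ^ K - 1) ≤ 5 * K := by
  have hKR : (1 : ℝ) ≤ K := by exact_mod_cast hK
  have hpos : (0 : ℝ) < 2 * K - 1 := by linarith
  rcases eq_or_lt_of_le hK with h1 | h2
  · subst K; norm_num
  · have hK2 : (2 : ℝ) ≤ K := by exact_mod_cast h2
    have ha : (0 : ℝ) ≤ 2 / (2 * K - 1) := by positivity
    have hr : (1 + 2 / (2 * K - 1) : ℝ) ^ K ≤ Real.exp (2 / (2 * K - 1)) ^ K := by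
      apply pow_le_pow_left₀ (by linarith)
      have := Real.add_one_le_exp (2 / (2 * K - 1))
      linarith
    have hr2 : Real.exp (2 / (2 * K - 1)) ^ K = Real.exp (K * (2 / (2 * K - 1))) := by
      rw [Real.exp_nat_mul]
    have harg : (K : ℝ) * (2 / (2 * K - 1)) ≤ 3 / 2 := by
      rw [← mul_div_assoc, div_le_iff₀ hpos]
      nlinarith
    have hexp32 : Real.exp (3 / 2) ≤ 4.5 := by
      have h3 : Real.exp (3 / 2) ^ 2 = Real.exp 3 := by
        rw [← Real.exp_nat_mul]; norm_num
      have he1 : Real.exp 1 < 2.7182818286 := Real.exp_one_lt_d9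
      have he3 : Real.exp 3 = Real.exp 1 ^ 3 := by
        rw [← Real.exp_nat_mul]; norm_num
      have hcube : Real.exp 1 ^ 3 < 20.25 := by
        have := pow_lt_pow_left₀ he1 (le_of_lt (Real.exp_pos 1)) (n := 3) (by norm_num)
        calc Real.exp 1 ^ 3 < 2.7182818286 ^ 3 := this
          _ < 20.25 := by norm_num
      have hsq : Real.exp (3 / 2) ^ 2 < 20.25 := by rw [h3, he3]; exact hcube
      nlinarith [Real.exp_pos (3 / 2)]
    have hfin : (1 + 2 / (2 * K - 1) : ℝ) ^ K ≤ 4.5 := by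
      calc (1 + 2 / (2 * K - 1) : ℝ) ^ K ≤ Real.exp (K * (2 / (2 * K - 1))) := by
            rw [← hr2]; exact hr
        _ ≤ Real.exp (3 / 2) := Real.exp_le_exp.mpr harg
        _ ≤ 4.5 := hexp32
    have : ((2 * K : ℝ) - 1) / 2 * ((1 + 2 / (2 * K - 1)) ^ K - 1) ≤
        ((2 * K : ℝ) - 1) / 2 * 3.5 := by
      apply mul_le_mul_of_nonneg_left (by linarith) (by linarith)
    nlinarith

end Helpers

lemma aux_integrable_mul {α : Type*} {mα : MeasurableSpace α} {μ : Measure α} {u v : α → ℝ}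
    (hu : MemLp u 2 μ) (hv : MemLp v 2 μ) : Integrable (fun ω => u ω * v ω) μ := by
  have h : MemLp (u • v) 1 μ := by
    exact hv.smul hu
  exact memLp_one_iff_integrable.mp h

lemma aux_condexp_clm {α : Type*} {m m0 : MeasurableSpace α} {μ : Measure α} (hm : m ≤ m0)
    [SigmaFinite (μ.trim hm)] {E F : Type*}
    [NormedAddCommGroup E] [NormedSpace ℝ E] [CompleteSpace E]
    [NormedAddCommGroup F] [NormedSpace ℝ F] [CompleteSpace F]
    (T : E →L[ℝ] F) {h : α → E} (hh : Integrable h μ) :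
    μ[fun ω => T (h ω)|m] =ᵐ[μ] fun ω => T ((μ[h|m]) ω) := by
  refine (ae_eq_condExp_of_forall_setIntegral_eq hm (T.integrable_comp hh)
    (fun s _ _ => (T.integrable_comp integrable_condExp).integrableOn)
    (fun s hs hμs => ?_) ?_).symm
  · rw [T.integral_comp_comm integrable_condExp.integrableOn,
      T.integral_comp_comm hh.integrableOn, setIntegral_condExp hm hh hs]
  · exact (T.continuous.comp_stronglyMeasurable stronglyMeasurable_condExp).aestronglyMeasurable


lemma aux_coord_le {d : ℕ} (u : EuclideanSpace ℝ (Fin d)) (j : Fin d) : |u j| ≤ ‖u‖ := by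
  rw [EuclideanSpace.norm_eq]
  rw [show |u j| = Real.sqrt (|u j| ^ 2) by rw [Real.sqrt_sq_eq_abs, abs_abs]]
  apply Real.sqrt_le_sqrt
  exact Finset.single_le_sum (f := fun i => |u i| ^ 2) (fun i _ => by positivity)
    (Finset.mem_univ j)

set_option maxHeartbeats 1000000

lemma per_worker {d K : ℕ} (hK : 0 < K) (L σL σG ηL : ℝ)
    (hL : 0 < L) (hσL : 0 ≤ σL) (hσG : 0 ≤ σG) (hηL : 0 < ηL)
    (Fi : EuclideanSpace ℝ (Fin d) → ℝ)
    (hFlip : LipschitzWith (Real.toNNReal L) (fun x => gradient Fi x))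
    (xt gfv : EuclideanSpace ℝ (Fin d))
    (hhet0 : ‖gradient Fi xt - gfv‖ ^ 2 ≤ σG ^ 2)
    {Ω : Type} [MeasureSpace Ω] [IsProbabilityMeasure (ℙ : Measure Ω)]
    (𝒢 : ℕ → MeasurableSpace Ω) (h𝒢 : ∀ k, 𝒢 k ≤ (inferInstance : MeasurableSpace Ω))
    (gg yy : ℕ → Ω → EuclideanSpace ℝ (Fin d))
    (hy0 : ∀ ω, yy 0 ω = xt)
    (hyrec : ∀ k ω, k < K → yy (k + 1) ω = yy k ω - ηL • gg k ω)
    (hymeas : ∀ k, Measurable[𝒢 k] (yy k))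
    (hgmeas : ∀ k, Measurable[𝒢 (k + 1)] (gg k))
    (hgint : ∀ k, Integrable (gg k) ℙ)
    (hgsq : ∀ k, Integrable (fun ω => ‖gg k ω‖ ^ 2) ℙ)
    (hunbiased : ∀ k, (ℙ : Measure Ω)[gg k | 𝒢 k] =ᵐ[ℙ] fun ω => gradient Fi (yy k ω))
    (hvar : ∀ k, (ℙ : Measure Ω)[(fun ω => ‖gg k ω - gradient Fi (yy k ω)‖ ^ 2) | 𝒢 k]
        ≤ᵐ[ℙ] fun _ => σL ^ 2)
    (hηL8 : ηL ≤ 1 / (8 * L * K)) :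
    ∫ ω, ‖∑ k ∈ range K, gradient Fi (yy k ω)‖ ^ 2 ∂ℙ
      ≤ 15 * (K : ℝ) ^ 3 * L ^ 2 * ηL ^ 2 * (σL ^ 2 + 6 * K * σG ^ 2)
        + (90 * (K : ℝ) ^ 4 * L ^ 2 * ηL ^ 2 + 3 * (K : ℝ) ^ 2) * ‖gfv‖ ^ 2
        + 3 * (K : ℝ) ^ 2 * σG ^ 2 := by
  have hKR : (1 : ℝ) ≤ (K : ℝ) := by exact_mod_cast hK
  have h2K : (0 : ℝ) < 2 * (K : ℝ) - 1 := by linarith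
  set c : ℝ := ηL ^ 2 * σL ^ 2 + 6 * (K : ℝ) * ηL ^ 2 * σG ^ 2 + 6 * (K : ℝ) * ηL ^ 2 * ‖gfv‖ ^ 2
    with hc
  have hc0 : 0 ≤ c := by positivity
  set r : ℝ := 1 + 2 / (2 * (K : ℝ) - 1) with hr
  have hr1 : 1 ≤ r := by
    rw [hr]; have : 0 ≤ 2 / (2 * (K : ℝ) - 1) := by positivity
    linarith
  -- basic measurability / integrability facts
  have hym : ∀ k, Measurable (yy k) := fun k => (hymeas k).mono (h𝒢 k) le_rfl
  have hGc : Continuous (fun z => gradient Fi z) := hFlip.continuous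
  have hlip : ∀ u v, ‖gradient Fi u - gradient Fi v‖ ≤ L * ‖u - v‖ := by
    intro u v
    have := hFlip.dist_le_mul u v
    rwa [dist_eq_norm, dist_eq_norm, Real.coe_toNNReal L hL.le] at this
  have hGmG : ∀ k, Measurable[𝒢 k] (fun ω => gradient Fi (yy k ω)) := fun k =>
    hGc.measurable.comp (hymeas k)
  have hGm : ∀ k, Measurable (fun ω => gradient Fi (yy k ω)) := fun k =>
    (hGmG k).mono (h𝒢 k) le_rfl
  have hgL2 : ∀ k, MemLp (gg k) 2 ℙ := fun k =>
    (memLp_two_iff_integrable_sq_norm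
      (((hgmeas k).mono (h𝒢 (k + 1)) le_rfl).aestronglyMeasurable)).mpr (hgsq k)
  have hyL2 : ∀ k, k ≤ K → MemLp (yy k) 2 ℙ := by
    intro k
    induction k with
    | zero =>
      intro _
      have hy : yy 0 = fun _ => xt := funext hy0
      rw [hy]; exact memLp_const xt
    | succ k ih =>
      intro hk1
      have hkK : k < K := hk1
      have hy : yy (k + 1) = fun ω => yy k ω - ηL • gg k ω := funext fun ω => hyrec k ω hkK
      rw [hy]
      exact (ih hkK.le).sub ((hgL2 k).const_smul ηL)
  have hymxL2 : ∀ k, k ≤ K → MemLp (fun ω => yy k ω - xt) 2 ℙ := fun k hk =>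
    (hyL2 k hk).sub (memLp_const xt)
  have hGL2 : ∀ k, k ≤ K → MemLp (fun ω => gradient Fi (yy k ω)) 2 ℙ := by
    intro k hk
    have hmem : MemLp (fun ω => ‖gradient Fi xt‖ + L * ‖yy k ω - xt‖) 2 ℙ :=
      by have := (memLp_const (μ := (ℙ : Measure Ω)) (p := 2) ‖gradient Fi xt‖).add
           (((hymxL2 k hk).norm).const_mul L); exact this
    refine hmem.of_le ((hGm k).aestronglyMeasurable) (Filter.Eventually.of_forall fun ω => ?_)
    have h1 : ‖gradient Fi (yy k ω)‖ ≤ ‖gradient Fi xt‖ + L * ‖yy k ω - xt‖ := by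
      have h2 := hlip (yy k ω) xt
      calc ‖gradient Fi (yy k ω)‖
          = ‖(gradient Fi (yy k ω) - gradient Fi xt) + gradient Fi xt‖ := by
            rw [sub_add_cancel]
        _ ≤ ‖gradient Fi (yy k ω) - gradient Fi xt‖ + ‖gradient Fi xt‖ := norm_add_le _ _
        _ ≤ ‖gradient Fi xt‖ + L * ‖yy k ω - xt‖ := by linarith
    exact h1.trans (le_abs_self _)
  have hsq : ∀ (h : Ω → EuclideanSpace ℝ (Fin d)), MemLp h 2 ℙ →
      Integrable (fun ω => ‖h ω‖ ^ 2) ℙ := fun h hh =>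
    (memLp_two_iff_integrable_sq_norm hh.aestronglyMeasurable).mp hh
  set D : ℕ → ℝ := fun k => ∫ ω, ‖yy k ω - xt‖ ^ 2 ∂ℙ with hD
  have hDint : ∀ k, k ≤ K → Integrable (fun ω => ‖yy k ω - xt‖ ^ 2) ℙ := fun k hk =>
    hsq _ (hymxL2 k hk)
  have hD0 : D 0 = 0 := by simp [hD, hy0]
  have hDnn : ∀ k, 0 ≤ D k := fun k => integral_nonneg (fun ω => by positivity)
  clear_value c r D
  -- the recursion
  have hrec : ∀ k, k < K → D (k + 1) ≤ r * D k + c := by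
    intro k hkK
    have hkK' := hkK.le
    have haL2 : MemLp (fun ω => yy k ω - xt - ηL • gradient Fi (yy k ω)) 2 ℙ :=
      (hymxL2 k hkK').sub ((hGL2 k hkK').const_smul ηL)
    have hξL2 : MemLp (fun ω => gg k ω - gradient Fi (yy k ω)) 2 ℙ :=
      (hgL2 k).sub (hGL2 k hkK')
    have ha𝒢 : Measurable[𝒢 k] (fun ω => yy k ω - xt - ηL • gradient Fi (yy k ω)) :=
      ((hymeas k).sub measurable_const).sub ((hGmG k).const_smul ηL)
    have hGint : Integrable (fun ω => gradient Fi (yy k ω)) ℙ :=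
      (hGL2 k hkK').integrable one_le_two
    have hξint : Integrable (fun ω => gg k ω - gradient Fi (yy k ω)) ℙ :=
      (hgint k).sub hGint
    have hξcond : (ℙ : Measure Ω)[fun ω => gg k ω - gradient Fi (yy k ω)|𝒢 k]
        =ᵐ[ℙ] fun _ => (0 : EuclideanSpace ℝ (Fin d)) := by
      have h1 : (ℙ : Measure Ω)[gg k - (fun ω => gradient Fi (yy k ω))|𝒢 k] =ᵐ[ℙ]
          (ℙ : Measure Ω)[gg k|𝒢 k] - (ℙ : Measure Ω)[fun ω => gradient Fi (yy k ω)|𝒢 k] :=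
        condExp_sub (hgint k) hGint (𝒢 k)
      have h2 : (ℙ : Measure Ω)[fun ω => gradient Fi (yy k ω)|𝒢 k]
          = fun ω => gradient Fi (yy k ω) :=
        condExp_of_stronglyMeasurable (h𝒢 k) ((hGmG k).stronglyMeasurable) hGint
      have h0 : (fun ω => gg k ω - gradient Fi (yy k ω))
          = gg k - (fun ω => gradient Fi (yy k ω)) := rfl
      rw [h0]
      refine h1.trans ?_
      rw [h2]
      filter_upwards [hunbiased k] with ω hω
      simp [hω]
    have hajL2 : ∀ j : Fin d,
        MemLp (fun ω => (yy k ω - xt - ηL • gradient Fi (yy k ω)) j) 2 ℙ := by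
      intro j
      refine (haL2.norm).of_le
        ((measurable_pi_apply j).comp ((WithLp.measurable_ofLp _ _).comp (ha𝒢.mono (h𝒢 k) le_rfl))).aestronglyMeasurable
        (Filter.Eventually.of_forall fun ω => ?_)
      rw [Real.norm_eq_abs, Real.norm_eq_abs, abs_of_nonneg (norm_nonneg _)]
      exact aux_coord_le _ j
    have hξjL2 : ∀ j : Fin d,
        MemLp (fun ω => (gg k ω - gradient Fi (yy k ω)) j) 2 ℙ := by
      intro j
      have hξm : Measurable (fun ω => gg k ω - gradient Fi (yy k ω)) :=
        ((hgmeas k).mono (h𝒢 (k + 1)) le_rfl).sub (hGm k)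
      refine (hξL2.norm).of_le
        ((measurable_pi_apply j).comp ((WithLp.measurable_ofLp _ _).comp hξm)).aestronglyMeasurable
        (Filter.Eventually.of_forall fun ω => ?_)
      rw [Real.norm_eq_abs, Real.norm_eq_abs, abs_of_nonneg (norm_nonneg _)]
      exact aux_coord_le _ j
    have hprod_int : ∀ j : Fin d, Integrable
        (fun ω => (yy k ω - xt - ηL • gradient Fi (yy k ω)) j
          * (gg k ω - gradient Fi (yy k ω)) j) ℙ :=
      fun j => aux_integrable_mul (hajL2 j) (hξjL2 j)
    have hcoordzero : ∀ j : Fin d,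
        ∫ ω, (yy k ω - xt - ηL • gradient Fi (yy k ω)) j
          * (gg k ω - gradient Fi (yy k ω)) j ∂ℙ = 0 := by
      intro j
      have hT : (ℙ : Measure Ω)[fun ω => (gg k ω - gradient Fi (yy k ω)) j|𝒢 k]
          =ᵐ[ℙ] fun ω =>
            ((ℙ : Measure Ω)[fun ω' => gg k ω' - gradient Fi (yy k ω')|𝒢 k]) ω j :=
        aux_condexp_clm (h𝒢 k) (EuclideanSpace.proj (𝕜 := ℝ) j) hξint
      have hξjcond : (ℙ : Measure Ω)[fun ω => (gg k ω - gradient Fi (yy k ω)) j|𝒢 k]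
          =ᵐ[ℙ] fun _ => (0 : ℝ) := by
        refine hT.trans ?_
        filter_upwards [hξcond] with ω hω
        rw [hω]
        rfl
      have hajsm : StronglyMeasurable[𝒢 k]
          (fun ω => (yy k ω - xt - ηL • gradient Fi (yy k ω)) j) :=
        ((measurable_pi_apply j).comp ((WithLp.measurable_ofLp _ _).comp ha𝒢)).stronglyMeasurable
      have hξjint : Integrable (fun ω => (gg k ω - gradient Fi (yy k ω)) j) ℙ :=
        (hξjL2 j).integrable one_le_two
      have hmul := condExp_mul_of_stronglyMeasurable_left (μ := (ℙ : Measure Ω)) hajsm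
        (hprod_int j) hξjint
      have hzero : (ℙ : Measure Ω)[(fun ω => (yy k ω - xt - ηL • gradient Fi (yy k ω)) j)
          * (fun ω => (gg k ω - gradient Fi (yy k ω)) j)|𝒢 k] =ᵐ[ℙ] fun _ => (0 : ℝ) := by
        refine hmul.trans ?_
        filter_upwards [hξjcond] with ω hω
        simp only [Pi.mul_apply, hω, mul_zero]
      calc ∫ ω, (yy k ω - xt - ηL • gradient Fi (yy k ω)) j
            * (gg k ω - gradient Fi (yy k ω)) j ∂ℙ
          = ∫ ω, ((ℙ : Measure Ω)[(fun ω => (yy k ω - xt - ηL • gradient Fi (yy k ω)) j)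
              * (fun ω => (gg k ω - gradient Fi (yy k ω)) j)|𝒢 k]) ω ∂ℙ :=
            (integral_condExp (h𝒢 k)).symm
        _ = 0 := by rw [integral_congr_ae hzero, integral_zero]
    have hcross : ∫ ω, (inner ℝ (yy k ω - xt - ηL • gradient Fi (yy k ω))
        (gg k ω - gradient Fi (yy k ω)) : ℝ) ∂ℙ = 0 := by
      have hinner_eq : ∀ ω, (inner ℝ (yy k ω - xt - ηL • gradient Fi (yy k ω))
          (gg k ω - gradient Fi (yy k ω)) : ℝ)
          = ∑ j : Fin d, (yy k ω - xt - ηL • gradient Fi (yy k ω)) j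
            * (gg k ω - gradient Fi (yy k ω)) j := by
        intro ω
        rw [PiLp.inner_apply]
        simp [RCLike.inner_apply, conj_trivial, mul_comm]
      rw [integral_congr_ae (Filter.Eventually.of_forall hinner_eq),
        integral_finset_sum _ (fun j _ => hprod_int j)]
      exact Finset.sum_eq_zero fun j _ => hcoordzero j
    have hvarI : ∫ ω, ‖gg k ω - gradient Fi (yy k ω)‖ ^ 2 ∂ℙ ≤ σL ^ 2 := by
      have h1 : ∫ ω, ‖gg k ω - gradient Fi (yy k ω)‖ ^ 2 ∂ℙ
          = ∫ ω, ((ℙ : Measure Ω)[(fun ω => ‖gg k ω - gradient Fi (yy k ω)‖ ^ 2)|𝒢 k]) ω ∂ℙ :=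
        (integral_condExp (h𝒢 k)).symm
      rw [h1]
      have h2 := integral_mono_ae integrable_condExp (integrable_const (σL ^ 2)) (hvar k)
      simpa [measure_univ] using h2
    have hptid : ∀ ω, ‖yy (k + 1) ω - xt‖ ^ 2
        = ‖yy k ω - xt - ηL • gradient Fi (yy k ω)‖ ^ 2
          - 2 * ηL * (inner ℝ (yy k ω - xt - ηL • gradient Fi (yy k ω))
            (gg k ω - gradient Fi (yy k ω)) : ℝ)
          + ηL ^ 2 * ‖gg k ω - gradient Fi (yy k ω)‖ ^ 2 := by
      intro ω
      have hy' : yy (k + 1) ω - xt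
          = (yy k ω - xt - ηL • gradient Fi (yy k ω))
            - ηL • (gg k ω - gradient Fi (yy k ω)) := by
        rw [hyrec k ω hkK, smul_sub]; abel
      rw [hy', @norm_sub_sq_real, real_inner_smul_right, norm_smul, Real.norm_eq_abs,
        mul_pow, sq_abs]
      ring
    have hIa : Integrable (fun ω => ‖yy k ω - xt - ηL • gradient Fi (yy k ω)‖ ^ 2) ℙ :=
      hsq _ haL2
    have hIin : Integrable (fun ω => (inner ℝ (yy k ω - xt - ηL • gradient Fi (yy k ω))
        (gg k ω - gradient Fi (yy k ω)) : ℝ)) ℙ := by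
      refine Integrable.mono' (aux_integrable_mul haL2.norm hξL2.norm)
        (haL2.aestronglyMeasurable.inner hξL2.aestronglyMeasurable)
        (Filter.Eventually.of_forall fun ω => ?_)
      rw [Real.norm_eq_abs]
      exact abs_real_inner_le_norm _ _
    have hIxi : Integrable (fun ω => ‖gg k ω - gradient Fi (yy k ω)‖ ^ 2) ℙ := hsq _ hξL2
    have hDk1 : D (k + 1) = (∫ ω, ‖yy k ω - xt - ηL • gradient Fi (yy k ω)‖ ^ 2 ∂ℙ)
        + ηL ^ 2 * (∫ ω, ‖gg k ω - gradient Fi (yy k ω)‖ ^ 2 ∂ℙ) := by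
      calc D (k + 1) = ∫ ω, (‖yy k ω - xt - ηL • gradient Fi (yy k ω)‖ ^ 2
            - 2 * ηL * (inner ℝ (yy k ω - xt - ηL • gradient Fi (yy k ω))
              (gg k ω - gradient Fi (yy k ω)) : ℝ)
            + ηL ^ 2 * ‖gg k ω - gradient Fi (yy k ω)‖ ^ 2) ∂ℙ := by
            rw [hD]
            exact integral_congr_ae (Filter.Eventually.of_forall hptid)
        _ = ((∫ ω, ‖yy k ω - xt - ηL • gradient Fi (yy k ω)‖ ^ 2 ∂ℙ)
              - ∫ ω, 2 * ηL * (inner ℝ (yy k ω - xt - ηL • gradient Fi (yy k ω))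
                (gg k ω - gradient Fi (yy k ω)) : ℝ) ∂ℙ)
            + ∫ ω, ηL ^ 2 * ‖gg k ω - gradient Fi (yy k ω)‖ ^ 2 ∂ℙ := by
            have hmul2 : Integrable (fun ω => 2 * ηL *
                (inner ℝ (yy k ω - xt - ηL • gradient Fi (yy k ω))
                  (gg k ω - gradient Fi (yy k ω)) : ℝ)) ℙ := hIin.const_mul _
            have hsub : Integrable (fun ω => ‖yy k ω - xt - ηL • gradient Fi (yy k ω)‖ ^ 2
                - 2 * ηL * (inner ℝ (yy k ω - xt - ηL • gradient Fi (yy k ω))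
                  (gg k ω - gradient Fi (yy k ω)) : ℝ)) ℙ := hIa.sub hmul2
            have hmulxi : Integrable
                (fun ω => ηL ^ 2 * ‖gg k ω - gradient Fi (yy k ω)‖ ^ 2) ℙ :=
              hIxi.const_mul _
            rw [integral_add hsub hmulxi, integral_sub hIa hmul2]
        _ = (∫ ω, ‖yy k ω - xt - ηL • gradient Fi (yy k ω)‖ ^ 2 ∂ℙ)
            + ηL ^ 2 * (∫ ω, ‖gg k ω - gradient Fi (yy k ω)‖ ^ 2 ∂ℙ) := by
            rw [integral_const_mul, integral_const_mul, hcross]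
            ring
    have hpt : ∀ ω, ‖yy k ω - xt - ηL • gradient Fi (yy k ω)‖ ^ 2
        ≤ (1 + 1 / (2 * (K : ℝ) - 1) + 6 * (K : ℝ) * ηL ^ 2 * L ^ 2) * ‖yy k ω - xt‖ ^ 2
          + (6 * (K : ℝ) * ηL ^ 2 * σG ^ 2 + 6 * (K : ℝ) * ηL ^ 2 * ‖gfv‖ ^ 2) := by
      intro ω
      have hsplit : yy k ω - xt - ηL • gradient Fi (yy k ω)
          = (yy k ω - xt) + (-ηL) • ((gradient Fi (yy k ω) - gradient Fi xt)
            + (gradient Fi xt - gfv) + gfv) := by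
        have hS : (gradient Fi (yy k ω) - gradient Fi xt) + (gradient Fi xt - gfv) + gfv
            = gradient Fi (yy k ω) := by abel
        rw [hS, neg_smul]
        abel
      rw [hsplit]
      refine (aux_young _ _ h2K).trans ?_
      have h1p : (1 : ℝ) + (2 * (K : ℝ) - 1) = 2 * (K : ℝ) := by ring
      rw [h1p]
      have e0 : ‖(-ηL) • ((gradient Fi (yy k ω) - gradient Fi xt)
          + (gradient Fi xt - gfv) + gfv)‖ ^ 2
          = ηL ^ 2 * ‖(gradient Fi (yy k ω) - gradient Fi xt)
            + (gradient Fi xt - gfv) + gfv‖ ^ 2 := by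
        rw [norm_smul, Real.norm_eq_abs, abs_neg, mul_pow, sq_abs]
      rw [e0]
      have e1 := aux_three (gradient Fi (yy k ω) - gradient Fi xt) (gradient Fi xt - gfv) gfv
      have e2 : ‖gradient Fi (yy k ω) - gradient Fi xt‖ ^ 2 ≤ L ^ 2 * ‖yy k ω - xt‖ ^ 2 := by
        have h := hlip (yy k ω) xt
        nlinarith [norm_nonneg (gradient Fi (yy k ω) - gradient Fi xt),
          norm_nonneg (yy k ω - xt)]
      have e3 : ‖(gradient Fi (yy k ω) - gradient Fi xt) + (gradient Fi xt - gfv) + gfv‖ ^ 2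
          ≤ 3 * (L ^ 2 * ‖yy k ω - xt‖ ^ 2) + 3 * σG ^ 2 + 3 * ‖gfv‖ ^ 2 := by
        linarith [hhet0]
      have e4 := mul_le_mul_of_nonneg_left e3
        (show (0 : ℝ) ≤ 2 * (K : ℝ) * ηL ^ 2 by positivity)
      nlinarith [e4]
    have hcoef : 1 + 1 / (2 * (K : ℝ) - 1) + 6 * (K : ℝ) * ηL ^ 2 * L ^ 2 ≤ r := by
      rw [hr]
      have hη2 : ηL ^ 2 ≤ 1 / (64 * L ^ 2 * (K : ℝ) ^ 2) := by
        have := pow_le_pow_left₀ hηL.le hηL8 2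
        calc ηL ^ 2 ≤ (1 / (8 * L * (K : ℝ))) ^ 2 := this
          _ = 1 / (64 * L ^ 2 * (K : ℝ) ^ 2) := by
              rw [div_pow]; ring_nf
      have h1 : 6 * (K : ℝ) * ηL ^ 2 * L ^ 2 ≤ 3 / (32 * (K : ℝ)) := by
        have h2 := mul_le_mul_of_nonneg_left hη2
          (show (0 : ℝ) ≤ 6 * (K : ℝ) * L ^ 2 by positivity)
        calc 6 * (K : ℝ) * ηL ^ 2 * L ^ 2 = 6 * (K : ℝ) * L ^ 2 * ηL ^ 2 := by ring
          _ ≤ 6 * (K : ℝ) * L ^ 2 * (1 / (64 * L ^ 2 * (K : ℝ) ^ 2)) := h2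
          _ = 3 / (32 * (K : ℝ)) := by
              field_simp
              ring
      have h2 : 3 / (32 * (K : ℝ)) ≤ 1 / (2 * (K : ℝ) - 1) := by
        rw [div_le_div_iff₀ (by positivity) h2K]
        nlinarith
      have h6 : 2 / (2 * (K : ℝ) - 1) = 2 * (1 / (2 * (K : ℝ) - 1)) := by ring
      linarith
    have hRHSint : Integrable (fun ω =>
        (1 + 1 / (2 * (K : ℝ) - 1) + 6 * (K : ℝ) * ηL ^ 2 * L ^ 2) * ‖yy k ω - xt‖ ^ 2
          + (6 * (K : ℝ) * ηL ^ 2 * σG ^ 2 + 6 * (K : ℝ) * ηL ^ 2 * ‖gfv‖ ^ 2)) ℙ :=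
      ((hDint k hkK').const_mul _).add (integrable_const _)
    have hIab : (∫ ω, ‖yy k ω - xt - ηL • gradient Fi (yy k ω)‖ ^ 2 ∂ℙ)
        ≤ (1 + 1 / (2 * (K : ℝ) - 1) + 6 * (K : ℝ) * ηL ^ 2 * L ^ 2) * D k
          + (6 * (K : ℝ) * ηL ^ 2 * σG ^ 2 + 6 * (K : ℝ) * ηL ^ 2 * ‖gfv‖ ^ 2) := by
      have h3 := integral_mono hIa hRHSint hpt
      rw [integral_add ((hDint k hkK').const_mul _) (integrable_const _),
        integral_const_mul, integral_const] at h3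
      simpa [measure_univ, hD] using h3
    have h4 : ηL ^ 2 * (∫ ω, ‖gg k ω - gradient Fi (yy k ω)‖ ^ 2 ∂ℙ) ≤ ηL ^ 2 * σL ^ 2 :=
      mul_le_mul_of_nonneg_left hvarI (sq_nonneg ηL)
    have h5 := mul_le_mul_of_nonneg_right hcoef (hDnn k)
    rw [hDk1, hc]
    linarith
  -- geometric estimate
  have hgeo : ∀ k, k ≤ K → D k ≤ (2 * (K : ℝ) - 1) / 2 * (r ^ k - 1) * c := by
    intro k
    induction k with
    | zero => intro _; simp [hD0]
    | succ k ih =>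
      intro hk1
      have h1 := hrec k hk1
      have h2 := ih (Nat.le_of_succ_le hk1)
      have h3 : r * D k ≤ r * ((2 * (K : ℝ) - 1) / 2 * (r ^ k - 1) * c) :=
        mul_le_mul_of_nonneg_left h2 (by linarith)
      have hkey : r * ((2 * (K : ℝ) - 1) / 2 * (r ^ k - 1) * c) + c
          = (2 * (K : ℝ) - 1) / 2 * (r ^ (k + 1) - 1) * c := by
        rw [hr, pow_succ]
        field_simp
        ring
      rw [← hkey]
      exact h1.trans (add_le_add h3 le_rfl)
  have hDK : ∀ k, k ≤ K → D k ≤ 5 * (K : ℝ) * c := by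
    intro k hk
    have h1 := hgeo k hk
    have h2 : r ^ k ≤ r ^ K := pow_le_pow_right₀ hr1 hk
    have h3 := aux_geo hK
    rw [← hr] at h3
    have hM : (0 : ℝ) ≤ (2 * (K : ℝ) - 1) / 2 := by linarith
    calc D k ≤ (2 * (K : ℝ) - 1) / 2 * (r ^ k - 1) * c := h1
      _ ≤ (2 * (K : ℝ) - 1) / 2 * (r ^ K - 1) * c := by
          apply mul_le_mul_of_nonneg_right _ hc0
          apply mul_le_mul_of_nonneg_left _ hM
          linarith
      _ ≤ 5 * (K : ℝ) * c := mul_le_mul_of_nonneg_right h3 hc0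
  -- final assembly
  have hGsum : MemLp (fun ω => ∑ k ∈ range K, gradient Fi (yy k ω)) 2 ℙ := by
    have := memLp_finset_sum' (μ := (ℙ : Measure Ω)) (p := 2) (range K)
      (f := fun k ω => gradient Fi (yy k ω)) (fun k hk => hGL2 k (mem_range.mp hk).le)
    refine this.ae_eq (Filter.Eventually.of_forall fun ω => ?_)
    simp [Finset.sum_apply]
  have hLHSint : Integrable (fun ω => ‖∑ k ∈ range K, gradient Fi (yy k ω)‖ ^ 2) ℙ :=
    hsq _ hGsum
  have hptf : ∀ ω, ‖∑ k ∈ range K, gradient Fi (yy k ω)‖ ^ 2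
      ≤ 3 * (K : ℝ) * L ^ 2 * (∑ k ∈ range K, ‖yy k ω - xt‖ ^ 2)
        + (3 * (K : ℝ) ^ 2 * σG ^ 2 + 3 * (K : ℝ) ^ 2 * ‖gfv‖ ^ 2) := by
    intro ω
    have hsplit : ∑ k ∈ range K, gradient Fi (yy k ω)
        = (∑ k ∈ range K, (gradient Fi (yy k ω) - gradient Fi xt))
          + (K : ℝ) • (gradient Fi xt - gfv) + (K : ℝ) • gfv := by
      rw [Finset.sum_sub_distrib, Finset.sum_const, card_range,
        ← Nat.cast_smul_eq_nsmul ℝ K (gradient Fi xt), smul_sub]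
      abel
    rw [hsplit]
    refine (aux_three _ _ _).trans ?_
    have e1 := aux_sum_sq K (fun k => gradient Fi (yy k ω) - gradient Fi xt)
    have e2 : ∑ k ∈ range K, ‖gradient Fi (yy k ω) - gradient Fi xt‖ ^ 2
        ≤ ∑ k ∈ range K, L ^ 2 * ‖yy k ω - xt‖ ^ 2 :=
      Finset.sum_le_sum fun k _ => by
        have h := hlip (yy k ω) xt
        nlinarith [norm_nonneg (gradient Fi (yy k ω) - gradient Fi xt),
          norm_nonneg (yy k ω - xt)]
    have e2' : (K : ℝ) * (∑ k ∈ range K, ‖gradient Fi (yy k ω) - gradient Fi xt‖ ^ 2)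
        ≤ (K : ℝ) * ∑ k ∈ range K, L ^ 2 * ‖yy k ω - xt‖ ^ 2 :=
      mul_le_mul_of_nonneg_left e2 (by positivity)
    have e5 : ∑ k ∈ range K, L ^ 2 * ‖yy k ω - xt‖ ^ 2
        = L ^ 2 * ∑ k ∈ range K, ‖yy k ω - xt‖ ^ 2 := by rw [Finset.mul_sum]
    have e3 : ‖(K : ℝ) • (gradient Fi xt - gfv)‖ ^ 2
        = (K : ℝ) ^ 2 * ‖gradient Fi xt - gfv‖ ^ 2 := by
      rw [norm_smul, Real.norm_eq_abs, mul_pow, sq_abs]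
    have e4 : ‖(K : ℝ) • gfv‖ ^ 2 = (K : ℝ) ^ 2 * ‖gfv‖ ^ 2 := by
      rw [norm_smul, Real.norm_eq_abs, mul_pow, sq_abs]
    have e6 : (K : ℝ) ^ 2 * ‖gradient Fi xt - gfv‖ ^ 2 ≤ (K : ℝ) ^ 2 * σG ^ 2 :=
      mul_le_mul_of_nonneg_left hhet0 (by positivity)
    rw [e3, e4]
    rw [e5] at e2'
    linarith [e1.trans e2', e6]
  have hsumint : Integrable (fun ω => ∑ k ∈ range K, ‖yy k ω - xt‖ ^ 2) ℙ :=
    integrable_finset_sum _ (fun k hk => hDint k (mem_range.mp hk).le)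
  calc ∫ ω, ‖∑ k ∈ range K, gradient Fi (yy k ω)‖ ^ 2 ∂ℙ
      ≤ ∫ ω, (3 * (K : ℝ) * L ^ 2 * (∑ k ∈ range K, ‖yy k ω - xt‖ ^ 2)
          + (3 * (K : ℝ) ^ 2 * σG ^ 2 + 3 * (K : ℝ) ^ 2 * ‖gfv‖ ^ 2)) ∂ℙ :=
        integral_mono hLHSint ((hsumint.const_mul _).add (integrable_const _)) hptf
    _ = 3 * (K : ℝ) * L ^ 2 * (∑ k ∈ range K, D k)
        + (3 * (K : ℝ) ^ 2 * σG ^ 2 + 3 * (K : ℝ) ^ 2 * ‖gfv‖ ^ 2) := by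
        rw [integral_add (hsumint.const_mul _) (integrable_const _), integral_const_mul,
          integral_finset_sum _ (fun k hk => hDint k (mem_range.mp hk).le), integral_const]
        simp [measure_univ, hD]
    _ ≤ 3 * (K : ℝ) * L ^ 2 * ((K : ℝ) * (5 * (K : ℝ) * c))
        + (3 * (K : ℝ) ^ 2 * σG ^ 2 + 3 * (K : ℝ) ^ 2 * ‖gfv‖ ^ 2) := by
        have hsum : ∑ k ∈ range K, D k ≤ (K : ℝ) * (5 * (K : ℝ) * c) := by
          calc ∑ k ∈ range K, D k ≤ ∑ _k ∈ range K, 5 * (K : ℝ) * c :=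
                Finset.sum_le_sum fun k hk => hDK k (mem_range.mp hk).le
            _ = (K : ℝ) * (5 * (K : ℝ) * c) := by
                rw [Finset.sum_const, card_range, nsmul_eq_mul]
        have h30 : (0 : ℝ) ≤ 3 * (K : ℝ) * L ^ 2 := by positivity
        nlinarith [mul_le_mul_of_nonneg_left hsum h30]
    _ = 15 * (K : ℝ) ^ 3 * L ^ 2 * ηL ^ 2 * (σL ^ 2 + 6 * K * σG ^ 2)
        + (90 * (K : ℝ) ^ 4 * L ^ 2 * ηL ^ 2 + 3 * (K : ℝ) ^ 2) * ‖gfv‖ ^ 2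
        + 3 * (K : ℝ) ^ 2 * σG ^ 2 := by
        rw [hc]; ring

/-- **Bound on accumulated local gradients.**
Setting: one round of generalized FedAvg, conditioned on the current server iterate
`x_t = xt` (a deterministic point, since `E_t` conditions on `x_t`).  Each worker `i`
runs `K` local SGD steps `y i (k+1) = y i k − η_L • g i k` from `y i 0 = xt`, with
conditionally unbiased stochastic gradients of conditional variance `≤ σ_L²`, noises
mutually conditionally independent across workers (independence across steps is
encoded by the filtration `𝒢`).  `F i` has `L`-Lipschitz gradient,
`f = (1/m) ∑ i, F i`, and `‖∇F i x − ∇f x‖² ≤ σ_G²`.  If `η_L ≤ 1/(8LK)`, then,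
writing `θ i = ∑_{k<K} ∇F i (y i k)`,
`∑ i, E_t‖θ i‖² ≤ 15mK³L²η_L²(σ_L² + 6Kσ_G²)
  + (90mK⁴L²η_L² + 3mK²)‖∇f(x_t)‖² + 3mK²σ_G²`. -/
theorem accumulated_local_gradients_bound
    {d m K : ℕ} (hd : 0 < d) (hm : 0 < m) (hK : 0 < K)
    (L σL σG ηL : ℝ) (hL : 0 < L) (hσL : 0 ≤ σL) (hσG : 0 ≤ σG) (hηL : 0 < ηL)
    (F : Fin m → EuclideanSpace ℝ (Fin d) → ℝ)
    (hFdiff : ∀ i, Differentiable ℝ (F i))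
    (hFlip : ∀ i, LipschitzWith (Real.toNNReal L) (fun x => gradient (F i) x))
    (f : EuclideanSpace ℝ (Fin d) → ℝ)
    (hf : f = fun x => (1 / (m : ℝ)) * ∑ i, F i x)
    (hhet : ∀ i x, ‖gradient (F i) x - gradient f x‖ ^ 2 ≤ σG ^ 2)
    {Ω : Type} [MeasureSpace Ω] [IsProbabilityMeasure (ℙ : Measure Ω)]
    [StandardBorelSpace Ω]
    (𝒢 : ℕ → MeasurableSpace Ω)
    (h𝒢 : ∀ k, 𝒢 k ≤ (inferInstance : MeasurableSpace Ω)) (h𝒢mono : Monotone 𝒢)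
    (xt : EuclideanSpace ℝ (Fin d))
    (g y : Fin m → ℕ → Ω → EuclideanSpace ℝ (Fin d))
    (hy0 : ∀ i ω, y i 0 ω = xt)
    (hyrec : ∀ i k ω, k < K → y i (k + 1) ω = y i k ω - ηL • g i k ω)
    (hymeas : ∀ i k, Measurable[𝒢 k] (y i k))
    (hgmeas : ∀ i k, Measurable[𝒢 (k + 1)] (g i k))
    (hgint : ∀ i k, Integrable (g i k) ℙ)
    (hgsq : ∀ i k, Integrable (fun ω => ‖g i k ω‖ ^ 2) ℙ)
    (hunbiased : ∀ i k, (ℙ : Measure Ω)[g i k | 𝒢 k]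
        =ᵐ[ℙ] fun ω => gradient (F i) (y i k ω))
    (hvar : ∀ i k, (ℙ : Measure Ω)[(fun ω => ‖g i k ω - gradient (F i) (y i k ω)‖ ^ 2) | 𝒢 k]
        ≤ᵐ[ℙ] fun _ => σL ^ 2)
    (hindep : ∀ k, iCondIndepFun (𝒢 k) (h𝒢 k)
        (fun i ω => g i k ω - gradient (F i) (y i k ω)) ℙ)
    (hηL8 : ηL ≤ 1 / (8 * L * K)) :
    ∑ i, ∫ ω, ‖∑ k ∈ range K, gradient (F i) (y i k ω)‖ ^ 2 ∂ℙ
      ≤ 15 * m * K ^ 3 * L ^ 2 * ηL ^ 2 * (σL ^ 2 + 6 * K * σG ^ 2)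
        + (90 * m * K ^ 4 * L ^ 2 * ηL ^ 2 + 3 * m * K ^ 2) * ‖gradient f xt‖ ^ 2
        + 3 * m * K ^ 2 * σG ^ 2 := by
  have key : ∀ i : Fin m, ∫ ω, ‖∑ k ∈ range K, gradient (F i) (y i k ω)‖ ^ 2 ∂ℙ
      ≤ 15 * (K : ℝ) ^ 3 * L ^ 2 * ηL ^ 2 * (σL ^ 2 + 6 * K * σG ^ 2)
        + (90 * (K : ℝ) ^ 4 * L ^ 2 * ηL ^ 2 + 3 * (K : ℝ) ^ 2) * ‖gradient f xt‖ ^ 2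
        + 3 * (K : ℝ) ^ 2 * σG ^ 2 := fun i =>
    per_worker hK L σL σG ηL hL hσL hσG hηL (F i) (hFlip i) xt (gradient f xt)
      (hhet i xt) 𝒢 h𝒢 (g i) (y i) (hy0 i) (fun k ω hk => hyrec i k ω hk)
      (hymeas i) (hgmeas i) (hgint i) (hgsq i) (hunbiased i) (hvar i) hηL8
  calc ∑ i, ∫ ω, ‖∑ k ∈ range K, gradient (F i) (y i k ω)‖ ^ 2 ∂ℙ
      ≤ ∑ _i : Fin m, (15 * (K : ℝ) ^ 3 * L ^ 2 * ηL ^ 2 * (σL ^ 2 + 6 * K * σG ^ 2)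
        + (90 * (K : ℝ) ^ 4 * L ^ 2 * ηL ^ 2 + 3 * (K : ℝ) ^ 2) * ‖gradient f xt‖ ^ 2
        + 3 * (K : ℝ) ^ 2 * σG ^ 2) := Finset.sum_le_sum fun i _ => key i
    _ = (m : ℝ) * (15 * (K : ℝ) ^ 3 * L ^ 2 * ηL ^ 2 * (σL ^ 2 + 6 * K * σG ^ 2)
        + (90 * (K : ℝ) ^ 4 * L ^ 2 * ηL ^ 2 + 3 * (K : ℝ) ^ 2) * ‖gradient f xt‖ ^ 2
        + 3 * (K : ℝ) ^ 2 * σG ^ 2) := by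
        rw [Finset.sum_const, Finset.card_univ, Fintype.card_fin, nsmul_eq_mul]
    _ = 15 * m * K ^ 3 * L ^ 2 * ηL ^ 2 * (σL ^ 2 + 6 * K * σG ^ 2)
        + (90 * m * K ^ 4 * L ^ 2 * ηL ^ 2 + 3 * m * K ^ 2) * ‖gradient f xt‖ ^ 2
        + 3 * m * K ^ 2 * σG ^ 2 := by ring
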